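/- With Ψ and Φ as defined, Ψ ∘ Φ = id on H-constant n-cochains on A ⋊ H: for any H-constant f, Ψ(Φf)(a⁰⊗h⁰,…,aⁿ⊗hⁿ) = f(a⁰⊗h⁰,…,aⁿ⊗hⁿ). -/

import Mathlib

noncomputable section

open TensorProduct

variable {H A : Type} [Ring H] [HopfAlgebra ℂ H] [Ring A] [Algebra ℂ A]

/-- `sweedler N Δ₁ Δ₂ k g F` is the Sweedler sum `Σ F (g₍₁₎, …, g₍ₖ₊₁₎)`, computed
from a chosen finite representation `comul g = Σ_{i < N g} Δ₁ g i ⊗ Δ₂ g i` of the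
comultiplication. -/
def sweedler (N : H → ℕ) (Δ₁ Δ₂ : H → ℕ → H) :
    (k : ℕ) → H → ((Fin (k+1) → H) → ℂ) → ℂ
  | 0, g, F => F ![g]
  | k+1, g, F => ∑ i ∈ Finset.range (N g),
      sweedler N Δ₁ Δ₂ k (Δ₂ g i) (fun v => F (Fin.cons (Δ₁ g i) v))

/-- The multiplication of the crossed product `A ⋊ H`, as a linear map on
`(A ⊗ H) ⊗ (A ⊗ H)`; on pure tensors it is `(a ⊗ h)(b ⊗ g) = a h₍₁₎(b) ⊗ h₍₂₎ g`. -/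
def cpMul (ρ : H →ₗ[ℂ] A →ₗ[ℂ] A) :
    (A ⊗[ℂ] H) ⊗[ℂ] (A ⊗[ℂ] H) →ₗ[ℂ] A ⊗[ℂ] H :=
  (LinearMap.rTensor H (LinearMap.mul' ℂ A)) ∘ₗ
  (TensorProduct.assoc ℂ A A H).symm.toLinearMap ∘ₗ
  (LinearMap.lTensor A (TensorProduct.map (TensorProduct.lift ρ) (LinearMap.mul' ℂ H))) ∘ₗ
  (LinearMap.lTensor A (TensorProduct.tensorTensorTensorComm ℂ H H A H).toLinearMap) ∘ₗ
  (LinearMap.lTensor A (LinearMap.rTensor (A ⊗[ℂ] H) (Coalgebra.comul (R := ℂ)))) ∘ₗ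
  (TensorProduct.assoc ℂ A H (A ⊗[ℂ] H)).toLinearMap

/-- The tuple obtained from `x` by replacing the pair `(xʲ, xʲ⁺¹)` by the single
entry `y` (used with `y = xʲ xʲ⁺¹` for the `j`-th face map). -/
def faceTup {α : Type} {n : ℕ} (j : Fin (n+1)) (y : α) (x : Fin (n+2) → α) :
    Fin (n+1) → α :=
  fun k => if (k : ℕ) < (j : ℕ) then x k.castSucc else if k = j then y else x k.succ

/-- The `i`-th term of the product `(p.1 ⊗ p.2)(q.1 ⊗ q.2)` in `A ⋊ H`, for the chosen
representation of the comultiplication: `p.1 · (Δ₁ p.2 i)(q.1) ⊗ (Δ₂ p.2 i) q.2`. -/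
def cpPairTerm (Δ₁ Δ₂ : H → ℕ → H) (ρ : H →ₗ[ℂ] A →ₗ[ℂ] A) (p q : A × H) (i : ℕ) :
    A × H :=
  (p.1 * ρ (Δ₁ p.2 i) q.1, Δ₂ p.2 i * q.2)

/-- The Hochschild coboundary of a cochain on the crossed product `A ⋊ H`. -/
def cpb (ρ : H →ₗ[ℂ] A →ₗ[ℂ] A) {n : ℕ} (f : (Fin (n+1) → A ⊗[ℂ] H) → ℂ) :
    (Fin (n+2) → A ⊗[ℂ] H) → ℂ := fun x =>
  (∑ j : Fin (n+1), (-1 : ℂ) ^ (j : ℕ) *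
      f (faceTup j (cpMul ρ (x j.castSucc ⊗ₜ[ℂ] x j.succ)) x))
  + (-1 : ℂ) ^ (n+1) *
      f (fun k => if (k : ℕ) = 0 then cpMul ρ (x (Fin.last (n+1)) ⊗ₜ[ℂ] x 0)
                  else x k.castSucc)

/-- `f` vanishes whenever some argument in position `≥ 1` lies in the subalgebra
`1 ⊗ H` of `A ⋊ H`. -/
def HConstVanish {m : ℕ} (f : (Fin m → A ⊗[ℂ] H) → ℂ) : Prop :=
  ∀ x : Fin m → A ⊗[ℂ] H,
    (∃ j : Fin m, 0 < (j : ℕ) ∧ ∃ h : H, x j = (1 : A) ⊗ₜ[ℂ] h) → f x = 0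

/-- An `H`-constant cochain on `A ⋊ H`: both `f` and `bf` vanish whenever some
argument in position `≥ 1` lies in `1 ⊗ H`. -/
def IsHConstant (ρ : H →ₗ[ℂ] A →ₗ[ℂ] A) {n : ℕ}
    (f : MultilinearMap ℂ (fun _ : Fin (n+1) => A ⊗[ℂ] H) ℂ) : Prop :=
  HConstVanish ⇑f ∧ HConstVanish (cpb ρ ⇑f)

/-- Auxiliary recursion for `Ψ`: processes the pairs `x¹, …, xᵏ`, keeping an
accumulated Hopf algebra element `g`; at each step `Δg = g₍₁₎ ⊗ g₍₂₎` is split, the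
current slot becomes `g₍₁₎(aʲ)` and the accumulator becomes `g₍₂₎ hʲ`. -/
def psiAux (N : H → ℕ) (Δ₁ Δ₂ : H → ℕ → H) (ρ : H →ₗ[ℂ] A →ₗ[ℂ] A) :
    (k : ℕ) → H → (Fin k → A × H) → (H → (Fin k → A) → ℂ) → ℂ
  | 0, g, _, F => F g ![]
  | k+1, g, x, F => ∑ i ∈ Finset.range (N g),
      psiAux N Δ₁ Δ₂ ρ k (Δ₂ g i * (x 0).2) (fun j => x j.succ)
        (fun h v => F h (Fin.cons (ρ (Δ₁ g i) (x 0).1) v))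

/-- The value of `Ψφ` on the elementary tensors `a⁰ ⊗ h⁰, …, aⁿ ⊗ hⁿ`:
`Ψ(φ)(a⁰⊗h⁰, …, aⁿ⊗hⁿ) = φ(h⁰₍ₙ₊₁₎ ⋯ h^{n-1}₍₂₎ hⁿ, a⁰, h⁰₍₁₎(a¹), …,
h⁰₍ₙ₎⋯h^{n-1}₍₁₎(aⁿ))`. -/
def psiV (N : H → ℕ) (Δ₁ Δ₂ : H → ℕ → H) (ρ : H →ₗ[ℂ] A →ₗ[ℂ] A) {n : ℕ}
    (φf : H → (Fin (n+1) → A) → ℂ) (x : Fin (n+1) → A × H) : ℂ :=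
  psiAux N Δ₁ Δ₂ ρ n ((x 0).2) (fun j => x j.succ)
    (fun h v => φf h (Fin.cons (x 0).1 v))

/-- The equivariance condition `φ(S(g₍₂₎) h g₍₁₎, a⁰, …, aⁿ) =
φ(h, g₍₁₎(a⁰), …, g₍ₙ₊₁₎(aⁿ))` for a cochain `φ : H ⊗ A^{⊗(n+1)} → ℂ`. -/
def IsEquivariant (N : H → ℕ) (Δ₁ Δ₂ : H → ℕ → H) (ρ : H →ₗ[ℂ] A →ₗ[ℂ] A) {n : ℕ}
    (φf : H → (Fin (n+1) → A) → ℂ) : Prop :=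
  ∀ (g h : H) (a : Fin (n+1) → A),
    sweedler N Δ₁ Δ₂ 1 g
      (fun ℓ => φf (HopfAlgebra.antipode (R := ℂ) (ℓ 1) * h * ℓ 0) a)
      = sweedler N Δ₁ Δ₂ n g (fun ℓ => φf h (fun j => ρ (ℓ j) (a j)))

/-- The cyclic operator on equivariant cochains:
`t φ(h, a⁰, …, aⁿ) = φ(h₍₂₎, S⁻¹(h₍₁₎)(aⁿ), a⁰, …, aⁿ⁻¹)`. -/
def cycOpEq (N : H → ℕ) (Δ₁ Δ₂ : H → ℕ → H) (ρ : H →ₗ[ℂ] A →ₗ[ℂ] A)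
    (Sinv : H →ₗ[ℂ] H) {n : ℕ} (φf : H → (Fin (n+1) → A) → ℂ) :
    H → (Fin (n+1) → A) → ℂ := fun h a =>
  sweedler N Δ₁ Δ₂ 1 h (fun ℓ =>
    φf (ℓ 1) (Fin.cons (ρ (Sinv (ℓ 0)) (a (Fin.last n))) (fun j : Fin n => a j.castSucc)))

/-- The map `Φ`: `(Φf)(h, a⁰, …, aⁿ) = f(a⁰ ⊗ 1, …, aⁿ⁻¹ ⊗ 1, aⁿ ⊗ h)`. -/
def phiV {n : ℕ} (f : MultilinearMap ℂ (fun _ : Fin (n+1) => A ⊗[ℂ] H) ℂ) :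
    H → (Fin (n+1) → A) → ℂ := fun h a =>
  f (fun i => if i = Fin.last n then a i ⊗ₜ[ℂ] h else a i ⊗ₜ[ℂ] (1 : H))


set_option synthInstance.maxHeartbeats 1000000 in
set_option maxHeartbeats 1000000 in
lemma cpMul_tmul (N : H → ℕ) (Δ₁ Δ₂ : H → ℕ → H)
    (hrep : ∀ g : H, (Coalgebra.comul (R := ℂ) g : H ⊗[ℂ] H) =
      ∑ i ∈ Finset.range (N g), Δ₁ g i ⊗ₜ[ℂ] Δ₂ g i)
    (ρ : H →ₗ[ℂ] A →ₗ[ℂ] A) (a b : A) (h g : H) :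
    cpMul ρ ((a ⊗ₜ[ℂ] h) ⊗ₜ[ℂ] (b ⊗ₜ[ℂ] g)) =
      ∑ i ∈ Finset.range (N h), (a * ρ (Δ₁ h i) b) ⊗ₜ[ℂ] (Δ₂ h i * g) := by
  simp only [cpMul, LinearMap.coe_comp, Function.comp_apply, LinearEquiv.coe_coe,
    TensorProduct.assoc_tmul, LinearMap.lTensor_tmul, LinearMap.rTensor_tmul,
    hrep h]
  simp [TensorProduct.sum_tmul, TensorProduct.tmul_sum, map_sum,
    TensorProduct.tensorTensorTensorComm_tmul, TensorProduct.map_tmul,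
    TensorProduct.lift.tmul, LinearMap.mul'_apply, TensorProduct.assoc_symm_tmul]

lemma cpMul_oneH (ρ : H →ₗ[ℂ] A →ₗ[ℂ] A) (hρ_one : ρ 1 = LinearMap.id) (a : A) (g : H) :
    cpMul ρ ((a ⊗ₜ[ℂ] (1:H)) ⊗ₜ[ℂ] ((1:A) ⊗ₜ[ℂ] g)) = a ⊗ₜ[ℂ] g := by
  simp only [cpMul, LinearMap.coe_comp, Function.comp_apply, LinearEquiv.coe_coe,
    TensorProduct.assoc_tmul, LinearMap.lTensor_tmul, LinearMap.rTensor_tmul,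
    Bialgebra.comul_one, Algebra.TensorProduct.one_def]
  simp [TensorProduct.tensorTensorTensorComm_tmul, TensorProduct.map_tmul,
    TensorProduct.lift.tmul, LinearMap.mul'_apply, TensorProduct.assoc_symm_tmul, hρ_one]

lemma fin_congr {α : Type*} {m : ℕ} (u : Fin m → α) {i j : Fin m} (h : (i:ℕ) = (j:ℕ)) :
    u i = u j := congrArg u (Fin.ext h)

lemma slide {n : ℕ} (ρ : H →ₗ[ℂ] A →ₗ[ℂ] A)
    (f : MultilinearMap ℂ (fun _ : Fin (n+1) => A ⊗[ℂ] H) ℂ)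
    (hf : IsHConstant ρ f)
    (p : ℕ) (hp : p + 1 ≤ n) (g : H) (X : Fin (n+1) → A ⊗[ℂ] H) :
    f (Function.update X ⟨p, by omega⟩ (cpMul ρ (X ⟨p, by omega⟩ ⊗ₜ[ℂ] ((1:A) ⊗ₜ[ℂ] g))))
    = f (Function.update X ⟨p+1, by omega⟩
        (cpMul ρ (((1:A) ⊗ₜ[ℂ] g) ⊗ₜ[ℂ] X ⟨p+1, by omega⟩))) := by
  classical
  set z : Fin (n+2) → A ⊗[ℂ] H := fun i =>
    if h1 : (i:ℕ) < p+1 then X ⟨(i:ℕ), by omega⟩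
    else if h2 : (i:ℕ) = p+1 then (1:A) ⊗ₜ[ℂ] g
    else X ⟨(i:ℕ)-1, by omega⟩ with hzdef
  have hzval : ∀ (m : ℕ) (hm : m < n+2), z ⟨m, hm⟩ =
      if h1 : m < p+1 then X ⟨m, by omega⟩
      else if h2 : m = p+1 then (1:A) ⊗ₜ[ℂ] g
      else X ⟨m-1, by omega⟩ := fun m hm => rfl
  have hzmid : z ⟨p+1, by omega⟩ = (1:A) ⊗ₜ[ℂ] g := by
    rw [hzval]; simp
  have hz0 : cpb ρ ⇑f z = 0 :=
    hf.2 z ⟨⟨p+1, by omega⟩, by simp, g, hzmid⟩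
  -- wrap term vanishes
  have hwrap : f (fun k : Fin (n+1) => if (k : ℕ) = 0 then
      cpMul ρ (z (Fin.last (n+1)) ⊗ₜ[ℂ] z 0) else z k.castSucc) = 0 := by
    apply hf.1
    refine ⟨⟨p+1, by omega⟩, by simp, g, ?_⟩
    show (if ((p+1:ℕ) = 0) then cpMul ρ (z (Fin.last (n+1)) ⊗ₜ[ℂ] z 0)
        else z (⟨p+1, by omega⟩ : Fin (n+1)).castSucc) = (1:A) ⊗ₜ[ℂ] g
    rw [if_neg (Nat.succ_ne_zero p)]
    exact hzmid
  -- terms with j ∉ {p, p+1} vanish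
  have hvan : ∀ j : Fin (n+1), (j:ℕ) ≠ p → (j:ℕ) ≠ p+1 →
      f (faceTup j (cpMul ρ (z j.castSucc ⊗ₜ[ℂ] z j.succ)) z) = 0 := by
    intro j hj1 hj2
    apply hf.1
    by_cases hlt : (j:ℕ) < p
    · refine ⟨⟨p, by omega⟩, by simp; omega, g, ?_⟩
      have h1 : ¬ ((⟨p, by omega⟩ : Fin (n+1)) : ℕ) < (j:ℕ) := by simp; omega
      have h2 : (⟨p, by omega⟩ : Fin (n+1)) ≠ j := by
        intro hc; exact absurd (congrArg Fin.val hc) (by simp; omega)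
      simp only [faceTup, if_neg h1, if_neg h2]
      have : (⟨p, by omega⟩ : Fin (n+1)).succ = (⟨p+1, by omega⟩ : Fin (n+2)) := rfl
      rw [this, hzmid]
    · refine ⟨⟨p+1, by omega⟩, by simp, g, ?_⟩
      have h1 : ((⟨p+1, by omega⟩ : Fin (n+1)) : ℕ) < (j:ℕ) := by simp; omega
      simp only [faceTup, if_pos h1]
      have : (⟨p+1, by omega⟩ : Fin (n+1)).castSucc = (⟨p+1, by omega⟩ : Fin (n+2)) := rfl
      rw [this, hzmid]
  -- identify the two surviving faces
  have hfacep : faceTup (⟨p, by omega⟩ : Fin (n+1))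
      (cpMul ρ (z (⟨p, by omega⟩ : Fin (n+1)).castSucc ⊗ₜ[ℂ] z (⟨p, by omega⟩ : Fin (n+1)).succ)) z
      = Function.update X ⟨p, by omega⟩ (cpMul ρ (X ⟨p, by omega⟩ ⊗ₜ[ℂ] ((1:A) ⊗ₜ[ℂ] g))) := by
    have hc : z (⟨p, by omega⟩ : Fin (n+1)).castSucc = X ⟨p, by omega⟩ := by
      show z ⟨p, by omega⟩ = _
      rw [hzval]; simp [Nat.lt_succ_self]
    have hsu : z (⟨p, by omega⟩ : Fin (n+1)).succ = (1:A) ⊗ₜ[ℂ] g := hzmid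
    rw [hc, hsu]
    funext k
    simp only [faceTup, Function.update_apply]
    rcases lt_trichotomy (k:ℕ) p with hk | hk | hk
    · rw [if_pos (by simpa using hk), if_neg (by intro hc; apply absurd (congrArg Fin.val hc); simp; omega)]
      show z ⟨(k:ℕ), by omega⟩ = X k
      rw [hzval]; simp only [dif_pos (by omega : (k:ℕ) < p+1)]
      try exact fin_congr X rfl
    · rw [if_neg (by omega), if_pos (Fin.ext hk)]
      try rw [if_pos (Fin.ext hk)]
    · rw [if_neg (by omega), if_neg (by intro hc; exact absurd (congrArg Fin.val hc) (by simp; omega)),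
        if_neg (by intro hc; exact absurd (congrArg Fin.val hc) (by simp; omega))]
      show z ⟨(k:ℕ)+1, by omega⟩ = X k
      rw [hzval]
      rw [dif_neg (by omega), dif_neg (by omega)]
      exact fin_congr X (by simp)
  have hfacep1 : faceTup (⟨p+1, by omega⟩ : Fin (n+1))
      (cpMul ρ (z (⟨p+1, by omega⟩ : Fin (n+1)).castSucc ⊗ₜ[ℂ] z (⟨p+1, by omega⟩ : Fin (n+1)).succ)) z
      = Function.update X ⟨p+1, by omega⟩
          (cpMul ρ (((1:A) ⊗ₜ[ℂ] g) ⊗ₜ[ℂ] X ⟨p+1, by omega⟩)) := by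
    have hc : z (⟨p+1, by omega⟩ : Fin (n+1)).castSucc = (1:A) ⊗ₜ[ℂ] g := hzmid
    have hsu : z (⟨p+1, by omega⟩ : Fin (n+1)).succ = X ⟨p+1, by omega⟩ := by
      show z ⟨p+2, by omega⟩ = _
      rw [hzval, dif_neg (by omega), dif_neg (by omega)]
      exact fin_congr X (by simp)
    rw [hc, hsu]
    funext k
    simp only [faceTup, Function.update_apply]
    rcases lt_trichotomy (k:ℕ) (p+1) with hk | hk | hk
    · rw [if_pos (by simpa using hk), if_neg (by intro hc2; exact absurd (congrArg Fin.val hc2) (by simp; omega))]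
      show z ⟨(k:ℕ), by omega⟩ = X k
      rw [hzval, dif_pos (by omega)]
      try exact fin_congr X rfl
    · rw [if_neg (by omega), if_pos (Fin.ext hk)]
      try rw [if_pos (Fin.ext hk)]
    · rw [if_neg (by omega), if_neg (by intro hc2; exact absurd (congrArg Fin.val hc2) (by simp; omega)),
        if_neg (by intro hc2; exact absurd (congrArg Fin.val hc2) (by simp; omega))]
      show z ⟨(k:ℕ)+1, by omega⟩ = X k
      rw [hzval, dif_neg (by omega), dif_neg (by omega)]
      exact fin_congr X (by simp)
  set u := f (Function.update X ⟨p, by omega⟩ (cpMul ρ (X ⟨p, by omega⟩ ⊗ₜ[ℂ] ((1:A) ⊗ₜ[ℂ] g)))) with hu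
  set w := f (Function.update X ⟨p+1, by omega⟩ (cpMul ρ (((1:A) ⊗ₜ[ℂ] g) ⊗ₜ[ℂ] X ⟨p+1, by omega⟩))) with hw
  have hjp : (⟨p, by omega⟩ : Fin (n+1)) ≠ ⟨p+1, by omega⟩ := by
    intro hc; exact absurd (congrArg Fin.val hc) (by simp)
  have hface_sum : cpb ρ ⇑f z = (-1:ℂ)^p * u + (-1:ℂ)^(p+1) * w := by
    unfold cpb
    rw [hwrap, mul_zero, add_zero]
    rw [← Finset.sum_subset (Finset.subset_univ ({⟨p, by omega⟩, ⟨p+1, by omega⟩} :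
        Finset (Fin (n+1)))) ?_]
    · rw [Finset.sum_pair hjp]
      rw [hfacep, hfacep1, hu, hw]
    · intro j _ hj
      simp only [Finset.mem_insert, Finset.mem_singleton] at hj
      push_neg at hj
      rw [hvan j (fun hc => hj.1 (Fin.ext hc)) (fun hc => hj.2 (Fin.ext hc)), mul_zero]
  rw [hface_sum] at hz0
  have hne : ((-1:ℂ)^p) ≠ 0 := pow_ne_zero _ (by norm_num)
  refine mul_left_cancel₀ hne ?_
  have hpow : ((-1:ℂ)^(p+1) : ℂ) = -(-1:ℂ)^p := by ring
  rw [hpow] at hz0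
  linear_combination hz0

set_option maxHeartbeats 2000000 in
lemma key {n : ℕ} (N : H → ℕ) (Δ₁ Δ₂ : H → ℕ → H)
    (hrep : ∀ g : H, (Coalgebra.comul (R := ℂ) g : H ⊗[ℂ] H) =
      ∑ i ∈ Finset.range (N g), Δ₁ g i ⊗ₜ[ℂ] Δ₂ g i)
    (ρ : H →ₗ[ℂ] A →ₗ[ℂ] A) (hρ_one : ρ 1 = LinearMap.id)
    (f : MultilinearMap ℂ (fun _ : Fin (n+1) => A ⊗[ℂ] H) ℂ) (hf : IsHConstant ρ f)
    (a : Fin (n+1) → A) (hs : Fin (n+1) → H) :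
    ∀ (k : ℕ) (hk : k ≤ n) (g : H) (c : Fin (n+1) → A),
      psiAux N Δ₁ Δ₂ ρ k g
        (fun j : Fin k => (a ⟨n-k+1+(j:ℕ), by omega⟩, hs ⟨n-k+1+(j:ℕ), by omega⟩))
        (fun h v => f (fun i => (if hi : (i:ℕ) < n-k+1 then c i
            else v ⟨(i:ℕ)-(n-k+1), by omega⟩) ⊗ₜ[ℂ] (if (i:ℕ) = n then h else 1)))
      = f (fun i => if (i:ℕ) < n-k then c i ⊗ₜ[ℂ] (1:H)
          else if (i:ℕ) = n-k then c i ⊗ₜ[ℂ] g else a i ⊗ₜ[ℂ] hs i) := by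
  intro k
  induction k with
  | zero =>
    intro hk g c
    simp only [psiAux]
    congr 1
    funext i
    rw [dif_pos (by omega : (i:ℕ) < n - 0 + 1)]
    rcases lt_trichotomy (i:ℕ) n with hi|hi|hi
    · rw [if_neg (by omega), if_pos (by omega)]
    · rw [if_pos (by omega), if_neg (by omega), if_pos (by omega)]
    · exact absurd i.isLt (by omega)
  | succ k ih =>
    intro hk g c
    simp only [psiAux]
    have hpk : n - (k+1) + 1 = n - k := by omega
    have hstep : ∀ x ∈ Finset.range (N g),
        (psiAux N Δ₁ Δ₂ ρ k (Δ₂ g x * hs ⟨n - (k+1) + 1 + ((0 : Fin (k+1)):ℕ), by omega⟩)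
          (fun j => (a ⟨n - (k+1) + 1 + ((j.succ : Fin (k+1)):ℕ), by omega⟩,
                     hs ⟨n - (k+1) + 1 + ((j.succ : Fin (k+1)):ℕ), by omega⟩))
          (fun h v => f fun i =>
            (if hi : (i:ℕ) < n - (k+1) + 1 then c i
              else (Fin.cons (ρ (Δ₁ g x) (a ⟨n - (k+1) + 1 + ((0 : Fin (k+1)):ℕ), by omega⟩)) v
                  : Fin (k+1) → A)
                ⟨(i:ℕ) - (n - (k+1) + 1), by omega⟩) ⊗ₜ[ℂ]
              if (i:ℕ) = n then h else 1))
        = f (fun i => if (i:ℕ) < n - k then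
              (if (i:ℕ) = n - k then ρ (Δ₁ g x) (a ⟨n - k, by omega⟩) else c i) ⊗ₜ[ℂ] (1:H)
            else if (i:ℕ) = n - k then
              (if (i:ℕ) = n - k then ρ (Δ₁ g x) (a ⟨n - k, by omega⟩) else c i) ⊗ₜ[ℂ]
                (Δ₂ g x * hs ⟨n - k, by omega⟩)
            else a i ⊗ₜ[ℂ] hs i) := by
      intro x _
      have e0 : (⟨n - (k+1) + 1 + ((0 : Fin (k+1)):ℕ), by omega⟩ : Fin (n+1))
          = ⟨n - k, by omega⟩ := Fin.ext (by simp; omega)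
      rw [e0]
      have e3 : (fun j : Fin k => (a ⟨n - (k+1) + 1 + ((j.succ : Fin (k+1)):ℕ), by omega⟩,
                     hs ⟨n - (k+1) + 1 + ((j.succ : Fin (k+1)):ℕ), by omega⟩))
          = (fun j : Fin k => (a ⟨n - k + 1 + (j:ℕ), by omega⟩, hs ⟨n - k + 1 + (j:ℕ), by omega⟩)) := by
        funext j
        congr 1 <;> exact congrArg _ (Fin.ext (by simp [Fin.val_succ]; omega))
      rw [e3]
      have e4 : (fun (h : H) (v : Fin k → A) => f fun i =>
            (if hi : (i:ℕ) < n - (k+1) + 1 then c i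
              else (Fin.cons (ρ (Δ₁ g x) (a ⟨n - (k+1) + 1 + ((0 : Fin (k+1)):ℕ), by omega⟩)) v
                  : Fin (k+1) → A)
                ⟨(i:ℕ) - (n - (k+1) + 1), by omega⟩) ⊗ₜ[ℂ]
              if (i:ℕ) = n then h else 1)
          = (fun (h : H) (v : Fin k → A) => f fun i =>
            (if hi : (i:ℕ) < n - k + 1 then
                (if (i:ℕ) = n - k then ρ (Δ₁ g x) (a ⟨n - k, by omega⟩) else c i)
              else v ⟨(i:ℕ) - (n - k + 1), by omega⟩) ⊗ₜ[ℂ]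
              if (i:ℕ) = n then h else 1) := by
        funext h v
        refine congrArg f (funext fun i => ?_)
        by_cases h1 : (i:ℕ) < n - k
        · rw [dif_pos (show (i:ℕ) < n - (k+1) + 1 by omega),
            dif_pos (show (i:ℕ) < n - k + 1 by omega),
            if_neg (show ¬((i:ℕ) = n - k) by omega)]
        · by_cases h2 : (i:ℕ) = n - k
          · rw [dif_neg (show ¬((i:ℕ) < n - (k+1) + 1) by omega),
              dif_pos (show (i:ℕ) < n - k + 1 by omega), if_pos h2]
            rw [show (⟨(i:ℕ) - (n - (k+1) + 1), by omega⟩ : Fin (k+1)) = 0 from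
              Fin.ext (by simp; omega)]
            rw [Fin.cons_zero]
            exact congrArg (fun y => ρ (Δ₁ g x) y ⊗ₜ[ℂ] (if (i:ℕ) = n then h else 1))
              (fin_congr a (by simp; omega))
          · rw [dif_neg (show ¬((i:ℕ) < n - (k+1) + 1) by omega),
              dif_neg (show ¬((i:ℕ) < n - k + 1) by omega)]
            have hbound : (i:ℕ) - (n - k + 1) < k := by omega
            have hidx : (⟨(i:ℕ) - (n - (k+1) + 1), by omega⟩ : Fin (k+1))
                = Fin.succ ⟨(i:ℕ) - (n - k + 1), hbound⟩ := by
              rw [Fin.succ_mk]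
              exact Fin.ext (by simp; omega)
            rw [hidx, Fin.cons_succ]
      rw [e4]
      exact ih (by omega) (Δ₂ g x * hs ⟨n - k, by omega⟩)
        (fun i' : Fin (n+1) => if (i':ℕ) = n - k then ρ (Δ₁ g x) (a ⟨n - k, by omega⟩) else c i')
    rw [Finset.sum_congr rfl hstep]
    -- now slide the accumulated element from slot n-(k+1) to slot n-k
    set X : Fin (n+1) → A ⊗[ℂ] H := fun i' =>
      if (i':ℕ) ≤ n - (k+1) then c i' ⊗ₜ[ℂ] (1:H) else a i' ⊗ₜ[ℂ] hs i' with hXdef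
    have hX1 : X ⟨n - (k+1), by omega⟩ = c ⟨n - (k+1), by omega⟩ ⊗ₜ[ℂ] (1:H) := by
      rw [hXdef]; exact if_pos (by simp)
    have hX2 : X ⟨n - (k+1) + 1, by omega⟩ = a ⟨n - k, by omega⟩ ⊗ₜ[ℂ] hs ⟨n - k, by omega⟩ := by
      rw [hXdef]
      simp only
      rw [if_neg (by simp)]
      congr 1 <;> exact congrArg _ (Fin.ext (by simp; omega))
    have hsl := slide ρ f hf (n - (k+1)) (by omega) g X
    rw [hX1, cpMul_oneH ρ hρ_one, hX2,
      cpMul_tmul N Δ₁ Δ₂ hrep ρ (1:A) (a ⟨n - k, by omega⟩) g (hs ⟨n - k, by omega⟩)] at hsl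
    simp only [one_mul] at hsl
    rw [MultilinearMap.map_update_sum] at hsl
    have hXi : ∀ i : Fin (n+1), X i =
        if (i:ℕ) ≤ n - (k+1) then c i ⊗ₜ[ℂ] (1:H) else a i ⊗ₜ[ℂ] hs i := fun i => rfl
    have h4 : ∀ x ∈ Finset.range (N g),
        f (fun i => if (i:ℕ) < n - k then
              (if (i:ℕ) = n - k then ρ (Δ₁ g x) (a ⟨n - k, by omega⟩) else c i) ⊗ₜ[ℂ] (1:H)
            else if (i:ℕ) = n - k then
              (if (i:ℕ) = n - k then ρ (Δ₁ g x) (a ⟨n - k, by omega⟩) else c i) ⊗ₜ[ℂ]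
                (Δ₂ g x * hs ⟨n - k, by omega⟩)
            else a i ⊗ₜ[ℂ] hs i)
        = f (Function.update X ⟨n - (k+1) + 1, by omega⟩
            (ρ (Δ₁ g x) (a ⟨n - k, by omega⟩) ⊗ₜ[ℂ] (Δ₂ g x * hs ⟨n - k, by omega⟩))) := by
      intro x _
      refine congrArg f (funext fun i => ?_)
      rw [Function.update_apply]
      by_cases h2 : (i:ℕ) = n - k
      · have he : i = ⟨n - (k+1) + 1, by omega⟩ := Fin.ext (by simp; omega)
        rw [if_pos he, if_neg (show ¬((i:ℕ) < n - k) by omega), if_pos h2, if_pos h2]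
      · have hne : i ≠ ⟨n - (k+1) + 1, by omega⟩ := by
          intro hc; exact absurd (congrArg Fin.val hc) (by simp; omega)
        rw [if_neg hne, hXi i]
        by_cases h1 : (i:ℕ) < n - k
        · rw [if_pos h1, if_neg h2, if_pos (show (i:ℕ) ≤ n - (k+1) by omega)]
        · rw [if_neg h1, if_neg h2, if_neg (show ¬((i:ℕ) ≤ n - (k+1)) by omega)]
    rw [Finset.sum_congr rfl h4, ← hsl]
    refine congrArg f (funext fun i => ?_)
    rw [Function.update_apply]
    by_cases h2 : (i:ℕ) = n - (k+1)
    · have he : i = ⟨n - (k+1), by omega⟩ := Fin.ext (by simp; omega)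
      rw [if_pos he, if_neg (show ¬((i:ℕ) < n - (k+1)) by omega), if_pos h2, he]
    · have hne : i ≠ ⟨n - (k+1), by omega⟩ := by
        intro hc; exact absurd (congrArg Fin.val hc) (by simp; omega)
      rw [if_neg hne, hXi i]
      by_cases h1 : (i:ℕ) < n - (k+1)
      · rw [if_pos h1, if_pos (show (i:ℕ) ≤ n - (k+1) by omega)]
      · rw [if_neg h1, if_neg h2, if_neg (show ¬((i:ℕ) ≤ n - (k+1)) by omega)]

set_option maxHeartbeats 2000000 in
theorem statement17' {n : ℕ}
    (N : H → ℕ) (Δ₁ Δ₂ : H → ℕ → H)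
    (hrep : ∀ g : H, (Coalgebra.comul (R := ℂ) g : H ⊗[ℂ] H) =
      ∑ i ∈ Finset.range (N g), Δ₁ g i ⊗ₜ[ℂ] Δ₂ g i)
    (ρ : H →ₗ[ℂ] A →ₗ[ℂ] A)
    (hρ_one : ρ 1 = LinearMap.id)
    (f : MultilinearMap ℂ (fun _ : Fin (n+1) => A ⊗[ℂ] H) ℂ)
    (hf : IsHConstant ρ f) :
    ∀ (a : Fin (n+1) → A) (hs : Fin (n+1) → H),
      psiV N Δ₁ Δ₂ ρ (phiV f) (fun i => (a i, hs i))
        = f (fun i => a i ⊗ₜ[ℂ] hs i) := by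
  intro a hs
  show psiAux N Δ₁ Δ₂ ρ n (hs 0)
      (fun j : Fin n => ((fun i : Fin (n+1) => (a i, hs i)) j.succ))
      (fun h v => phiV f h (Fin.cons (a 0) v))
    = f (fun i => a i ⊗ₜ[ℂ] hs i)
  have e1 : (fun j : Fin n => (fun i : Fin (n+1) => (a i, hs i)) j.succ)
      = (fun j : Fin n => (a ⟨n - n + 1 + (j:ℕ), by omega⟩, hs ⟨n - n + 1 + (j:ℕ), by omega⟩)) := by
    funext j
    simp only
    congr 1 <;> exact congrArg _ (Fin.ext (by simp; omega))
  have e2 : (fun (h : H) (v : Fin n → A) => phiV f h (Fin.cons (a 0) v))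
      = (fun (h : H) (v : Fin n → A) => f (fun i =>
          (if hi : (i:ℕ) < n - n + 1 then a 0
            else v ⟨(i:ℕ) - (n - n + 1), by omega⟩) ⊗ₜ[ℂ]
          (if (i:ℕ) = n then h else 1))) := by
    funext h v
    simp only [phiV]
    refine congrArg f (funext fun i => ?_)
    have hval : (Fin.cons (a 0) v : Fin (n+1) → A) i
        = (if hi : (i:ℕ) < n - n + 1 then a 0
            else v ⟨(i:ℕ) - (n - n + 1), by omega⟩) := by
      by_cases h0 : (i:ℕ) < n - n + 1
      · rw [dif_pos h0, show i = (0 : Fin (n+1)) from Fin.val_eq_zero_iff.mp (by omega), Fin.cons_zero]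
      · rw [dif_neg h0]
        have hidx : i = Fin.succ ⟨(i:ℕ) - 1, by omega⟩ := by
          rw [Fin.succ_mk]; exact Fin.ext (by simp; omega)
        conv_lhs => rw [hidx]
        rw [Fin.cons_succ]
        exact congrArg v (Fin.mk_eq_mk.mpr (by omega))
    by_cases h2 : i = Fin.last n
    · rw [if_pos h2, hval, if_pos (show (i:ℕ) = n by rw [h2]; simp)]
    · rw [if_neg h2, hval,
        if_neg (show ¬((i:ℕ) = n) from fun hc => h2 (Fin.ext (by simp [hc])))]
  rw [e1, e2]
  refine (key N Δ₁ Δ₂ hrep ρ hρ_one f hf a hs n le_rfl (hs 0) (fun _ => a 0)).trans ?_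
  refine congrArg f (funext fun i => ?_)
  by_cases h0 : (i:ℕ) = n - n
  · rw [if_neg (show ¬((i:ℕ) < n - n) by omega), if_pos h0]
    have : i = (0 : Fin (n+1)) := Fin.val_eq_zero_iff.mp (by omega)
    rw [this]
  · rw [if_neg (show ¬((i:ℕ) < n - n) by omega), if_neg h0]


/-- `Ψ ∘ Φ = id` on `H`-constant cochains on `A ⋊ H`:
`Ψ(Φf)(a⁰ ⊗ h⁰, …, aⁿ ⊗ hⁿ) = f(a⁰ ⊗ h⁰, …, aⁿ ⊗ hⁿ)`. -/
theorem statement17 {n : ℕ}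
    (N : H → ℕ) (Δ₁ Δ₂ : H → ℕ → H)
    (hrep : ∀ g : H, (Coalgebra.comul (R := ℂ) g : H ⊗[ℂ] H) =
      ∑ i ∈ Finset.range (N g), Δ₁ g i ⊗ₜ[ℂ] Δ₂ g i)
    (ρ : H →ₗ[ℂ] A →ₗ[ℂ] A)
    (hρ_one : ρ 1 = LinearMap.id)
    (hρ_mul : ∀ g h : H, ρ (g * h) = ρ g ∘ₗ ρ h)
    (hact_mul : ∀ (h : H) (a b : A),
      ρ h (a * b) = ∑ i ∈ Finset.range (N h), ρ (Δ₁ h i) a * ρ (Δ₂ h i) b)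
    (hact_one : ∀ h : H, ρ h 1 = (Coalgebra.counit (R := ℂ) h) • (1 : A))
    (f : MultilinearMap ℂ (fun _ : Fin (n+1) => A ⊗[ℂ] H) ℂ)
    (hf : IsHConstant ρ f) :
    ∀ (a : Fin (n+1) → A) (hs : Fin (n+1) → H),
      psiV N Δ₁ Δ₂ ρ (phiV f) (fun i => (a i, hs i))
        = f (fun i => a i ⊗ₜ[ℂ] hs i) := by
  exact statement17' N Δ₁ Δ₂ hrep ρ hρ_one f hf

end
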